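/- Fix q ∈ ℝ^d with q ≠ 0, η > 0, and x ∈ ℝ^d with p = ⟨q, x⟩ < 1. Define s : [0,∞) → ℝ by s(h) = (p − 1 + √((p−1)² + 2 h η ‖q‖²)) / ‖q‖². Then s(0) = 0, ⟨q, x − s(h) q⟩ = 1 − √((p−1)² + 2 h η ‖q‖²) < 1 for all h ≥ 0, and s'(h) = η / (1 − ⟨q, x − s(h) q⟩) for all h ≥ 0; that is, s is the IWA scaling function for the logarithmic loss with label y = 0, ℓ̂(r) = −ln(1 − r). -/

import Mathlib

open scoped RealInnerProductSpace

/-- The explicit IWA scaling function for the logarithmic loss with label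
`y = 0`, `ℓ̂(r) = -ln(1 - r)`: `s(h) = (p - 1 + √((p-1)² + 2hη‖q‖²)) / ‖q‖²`
satisfies `s(0) = 0`, the prediction along the flow is `⟨q, x - s(h) q⟩ =
1 - √((p-1)² + 2hη‖q‖²) < 1`, and `s'(h) = η / (1 - ⟨q, x - s(h) q⟩)` for all
`h ≥ 0`. -/
theorem iwa_scaling_log_loss_label_zero
    (d : ℕ) (q : EuclideanSpace ℝ (Fin d)) (hq : q ≠ 0) (η : ℝ) (hη : 0 < η)
    (x : EuclideanSpace ℝ (Fin d)) (p : ℝ) (hp : p = ⟪q, x⟫) (hplt : p < 1)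
    (s : ℝ → ℝ)
    (hs : ∀ h : ℝ,
      s h = (p - 1 + Real.sqrt ((p - 1) ^ 2 + 2 * h * η * ‖q‖ ^ 2)) / ‖q‖ ^ 2) :
    s 0 = 0 ∧ ∀ h : ℝ, 0 ≤ h →
      (⟪q, x - s h • q⟫ = 1 - Real.sqrt ((p - 1) ^ 2 + 2 * h * η * ‖q‖ ^ 2))
      ∧ (⟪q, x - s h • q⟫ < 1)
      ∧ HasDerivAt s (η / (1 - ⟪q, x - s h • q⟫)) h := by
  have hq2 : (0:ℝ) < ‖q‖ ^ 2 := by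
    have := norm_pos_iff.mpr hq
    positivity
  have hp1 : (0:ℝ) < (p - 1) ^ 2 := by nlinarith
  constructor
  · rw [hs]
    have : 2 * (0:ℝ) * η * ‖q‖ ^ 2 = 0 := by ring
    rw [this, add_zero, Real.sqrt_sq_eq_abs, abs_of_neg (by linarith : p - 1 < 0)]
    field_simp
    ring
  · intro h hh
    set A : ℝ := (p - 1) ^ 2 + 2 * h * η * ‖q‖ ^ 2 with hA
    have hApos : 0 < A := by
      have : 0 ≤ 2 * h * η * ‖q‖ ^ 2 := by positivity
      linarith
    have hsq : 0 < Real.sqrt A := Real.sqrt_pos.mpr hApos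
    have hinner : ⟪q, x - s h • q⟫ = 1 - Real.sqrt A := by
      rw [inner_sub_right, inner_smul_right, real_inner_self_eq_norm_sq, ← hp, hs]
      field_simp
      ring
    refine ⟨hinner, by rw [hinner]; linarith, ?_⟩
    rw [hinner]
    have hu : HasDerivAt (fun t : ℝ => (p - 1) ^ 2 + 2 * t * η * ‖q‖ ^ 2)
        (2 * η * ‖q‖ ^ 2) h := by
      have h1 : (fun t : ℝ => (p - 1) ^ 2 + 2 * t * η * ‖q‖ ^ 2)
          = fun t : ℝ => (p - 1) ^ 2 + (2 * η * ‖q‖ ^ 2) * t := by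
        funext t; ring
      rw [h1]
      simpa using ((hasDerivAt_id h).const_mul (2 * η * ‖q‖ ^ 2)).const_add
        ((p - 1) ^ 2)
    have hsqrt : HasDerivAt (fun t : ℝ =>
        Real.sqrt ((p - 1) ^ 2 + 2 * t * η * ‖q‖ ^ 2))
        (1 / (2 * Real.sqrt A) * (2 * η * ‖q‖ ^ 2)) h := by
      have := (Real.hasDerivAt_sqrt (ne_of_gt hApos)).comp h hu
      simpa [hA, Function.comp_def] using this
    have hmain : HasDerivAt (fun t : ℝ =>
        (p - 1 + Real.sqrt ((p - 1) ^ 2 + 2 * t * η * ‖q‖ ^ 2)) / ‖q‖ ^ 2)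
        ((1 / (2 * Real.sqrt A) * (2 * η * ‖q‖ ^ 2)) / ‖q‖ ^ 2) h :=
      (hsqrt.const_add (p - 1)).div_const _
    have hfun : s = fun t : ℝ =>
        (p - 1 + Real.sqrt ((p - 1) ^ 2 + 2 * t * η * ‖q‖ ^ 2)) / ‖q‖ ^ 2 :=
      funext hs
    rw [hfun]
    convert hmain using 1
    rw [sub_sub_cancel]
    field_simp
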